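/- For a difference cycle (a : b : c) with a+b+c = n and a,b,c positive, the orbit of the triangle {0, a, a+b} under the Z_n-action v ↦ v+1 has cardinality n if a, b, c are not all equal, and cardinality n/3 if a = b = c (which requires 3 | n). -/
import Mathlib

def diffR (n x y : ℕ) : Prop :=
  x = y ∨ x + n = y ∨ x + 2*n = y ∨ y + n = x ∨ y + 2*n = x

lemma cast_eq_cases {n : ℕ} [NeZero n] {x y : ℕ} (hx : x < 3 * n) (hy : y < 3 * n)
    (h : (x : ZMod n) = (y : ZMod n)) : diffR n x y := by
  rw [ZMod.natCast_eq_natCast_iff] at h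
  unfold diffR
  rcases le_total x y with hle | hle
  · obtain ⟨k, hk⟩ := (Nat.modEq_iff_dvd' hle).mp h
    have h3 : n * k < n * 3 := hk ▸ (by omega : y - x < n * 3)
    have : k < 3 := Nat.lt_of_mul_lt_mul_left h3
    interval_cases k <;> omega
  · obtain ⟨k, hk⟩ := (Nat.modEq_iff_dvd' hle).mp h.symm
    have h3 : n * k < n * 3 := hk ▸ (by omega : x - y < n * 3)
    have : k < 3 := Nat.lt_of_mul_lt_mul_left h3
    interval_cases k <;> omega

lemma diffCycle_inj (n a b c : ℕ) [NeZero n]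
    (ha : 0 < a) (hb : 0 < b) (hc : 0 < c) (habc : a + b + c = n)
    (hne : ¬ (a = b ∧ b = c)) :
    Function.Injective
      (fun i : ZMod n => ({i, i + (a : ZMod n), i + (a : ZMod n) + (b : ZMod n)} :
          Finset (ZMod n))) := by
  have hne' : a ≠ b ∨ b ≠ c := by tauto
  intro i j hij
  simp only at hij
  have h1 : i ∈ ({j, j + (a : ZMod n), j + (a : ZMod n) + (b : ZMod n)} : Finset (ZMod n)) := by
    rw [← hij]; simp
  simp only [Finset.mem_insert, Finset.mem_singleton] at h1
  rcases h1 with h1 | h1 | h1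
  · exact h1
  · exfalso
    subst h1
    have h2 : j ∈ ({j + (a : ZMod n), j + (a : ZMod n) + (a : ZMod n),
        j + (a : ZMod n) + (a : ZMod n) + (b : ZMod n)} : Finset (ZMod n)) := by
      rw [hij]; simp
    have h3 : j + (a : ZMod n) + (b : ZMod n) ∈ ({j + (a : ZMod n),
        j + (a : ZMod n) + (a : ZMod n),
        j + (a : ZMod n) + (a : ZMod n) + (b : ZMod n)} : Finset (ZMod n)) := by
      rw [hij]; simp
    simp only [Finset.mem_insert, Finset.mem_singleton] at h2 h3
    have d2 : diffR n 0 a ∨ diffR n 0 (a+a) ∨ diffR n 0 (a+a+b) := by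
      rcases h2 with h | h | h
      · exact Or.inl (cast_eq_cases (by omega) (by omega) (by push_cast; linear_combination h))
      · exact Or.inr (Or.inl (cast_eq_cases (by omega) (by omega)
          (by push_cast; linear_combination h)))
      · exact Or.inr (Or.inr (cast_eq_cases (by omega) (by omega)
          (by push_cast; linear_combination h)))
    have d3 : diffR n (a+b) a ∨ diffR n (a+b) (a+a) ∨ diffR n (a+b) (a+a+b) := by
      rcases h3 with h | h | h
      · exact Or.inl (cast_eq_cases (by omega) (by omega) (by push_cast; linear_combination h))
      · exact Or.inr (Or.inl (cast_eq_cases (by omega) (by omega)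
          (by push_cast; linear_combination h)))
      · exact Or.inr (Or.inr (cast_eq_cases (by omega) (by omega)
          (by push_cast; linear_combination h)))
    unfold diffR at d2 d3
    omega
  · exfalso
    subst h1
    have h2 : j ∈ ({j + (a : ZMod n) + (b : ZMod n),
        j + (a : ZMod n) + (b : ZMod n) + (a : ZMod n),
        j + (a : ZMod n) + (b : ZMod n) + (a : ZMod n) + (b : ZMod n)} : Finset (ZMod n)) := by
      rw [hij]; simp
    have h3 : j + (a : ZMod n) ∈ ({j + (a : ZMod n) + (b : ZMod n),
        j + (a : ZMod n) + (b : ZMod n) + (a : ZMod n),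
        j + (a : ZMod n) + (b : ZMod n) + (a : ZMod n) + (b : ZMod n)} : Finset (ZMod n)) := by
      rw [hij]; simp
    simp only [Finset.mem_insert, Finset.mem_singleton] at h2 h3
    have d2 : diffR n 0 (a+b) ∨ diffR n 0 (a+b+a) ∨ diffR n 0 (a+b+a+b) := by
      rcases h2 with h | h | h
      · exact Or.inl (cast_eq_cases (by omega) (by omega) (by push_cast; linear_combination h))
      · exact Or.inr (Or.inl (cast_eq_cases (by omega) (by omega)
          (by push_cast; linear_combination h)))
      · exact Or.inr (Or.inr (cast_eq_cases (by omega) (by omega)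
          (by push_cast; linear_combination h)))
    have d3 : diffR n a (a+b) ∨ diffR n a (a+b+a) ∨ diffR n a (a+b+a+b) := by
      rcases h3 with h | h | h
      · exact Or.inl (cast_eq_cases (by omega) (by omega) (by push_cast; linear_combination h))
      · exact Or.inr (Or.inl (cast_eq_cases (by omega) (by omega)
          (by push_cast; linear_combination h)))
      · exact Or.inr (Or.inr (cast_eq_cases (by omega) (by omega)
          (by push_cast; linear_combination h)))
    unfold diffR at d2 d3
    omega

lemma diffCycle_eq_case (n a : ℕ) [NeZero n]
    (ha : 0 < a) (habc : a + a + a = n) :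
    (Finset.univ.image
        (fun i : ZMod n => ({i, i + (a : ZMod n), i + (a : ZMod n) + (a : ZMod n)} :
          Finset (ZMod n)))).card = n / 3 := by
  set f : ZMod n → Finset (ZMod n) :=
    fun i => ({i, i + (a : ZMod n), i + (a : ZMod n) + (a : ZMod n)} : Finset (ZMod n)) with hf
  have hcast3 : ((a : ZMod n)) + a + a = 0 := by
    have : ((a + a + a : ℕ) : ZMod n) = 0 := by rw [habc]; exact ZMod.natCast_self n
    push_cast at this
    linear_combination this
  have key1 : ∀ x : ZMod n, f (x + (a : ZMod n)) = f x := by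
    intro x
    have h3 : x + (a : ZMod n) + a + a = x := by linear_combination hcast3
    simp only [hf]
    rw [h3]
    ext y
    simp only [Finset.mem_insert, Finset.mem_singleton]
    tauto
  have key2 : ∀ (k : ℕ) (x : ZMod n), f (x + ((a * k : ℕ) : ZMod n)) = f x := by
    intro k
    induction k with
    | zero => intro x; simp
    | succ k ih =>
      intro x
      have : x + ((a * (k+1) : ℕ) : ZMod n) = (x + ((a * k : ℕ) : ZMod n)) + (a : ZMod n) := by
        push_cast; ring
      rw [this, key1, ih]
  have himg : Finset.univ.image f = (Finset.range a).image (fun r : ℕ => f ((r : ℕ) : ZMod n)) := by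
    apply Finset.Subset.antisymm
    · intro s hs
      simp only [Finset.mem_image, Finset.mem_univ, true_and, Finset.mem_range] at hs ⊢
      obtain ⟨i, rfl⟩ := hs
      have hi : i = ((i.val % a : ℕ) : ZMod n) + ((a * (i.val / a) : ℕ) : ZMod n) := by
        conv_lhs => rw [← ZMod.natCast_rightInverse i]
        rw [← Nat.cast_add]
        congr 1
        exact (Nat.mod_add_div _ _).symm
      have hkey : f (((i.val % a : ℕ) : ZMod n)) = f i := by
        conv_rhs => rw [hi]
        rw [key2]
      exact ⟨i.val % a, Nat.mod_lt _ ha, hkey⟩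
    · intro s hs
      simp only [Finset.mem_image, Finset.mem_univ, true_and, Finset.mem_range] at hs ⊢
      obtain ⟨r, _, rfl⟩ := hs
      exact ⟨_, rfl⟩
  rw [himg, Finset.card_image_of_injOn, Finset.card_range]
  · omega
  · intro r hr s hs h
    simp only [Finset.coe_range, Set.mem_Iio] at hr hs
    simp only at h
    have hm : ((r : ℕ) : ZMod n) ∈ f ((s : ℕ) : ZMod n) := by
      rw [← h]; simp [hf]
    simp only [hf, Finset.mem_insert, Finset.mem_singleton] at hm
    have d : diffR n r s ∨ diffR n r (s + a) ∨ diffR n r (s + a + a) := by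
      rcases hm with h' | h' | h'
      · exact Or.inl (cast_eq_cases (by omega) (by omega) (by linear_combination h'))
      · exact Or.inr (Or.inl (cast_eq_cases (by omega) (by omega)
          (by push_cast; linear_combination h')))
      · exact Or.inr (Or.inr (cast_eq_cases (by omega) (by omega)
          (by push_cast; linear_combination h')))
    unfold diffR at d
    omega

/-- For a difference cycle `(a : b : c)` with `a + b + c = n`, the orbit of the triangle
`{0, a, a+b}` under `v ↦ v + 1` on `ZMod n` has cardinality `n` if `a, b, c` are not all
equal, and cardinality `n / 3` if `a = b = c`. -/
theorem diffCycle_orbit_card (n a b c : ℕ) [NeZero n]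
    (ha : 0 < a) (hb : 0 < b) (hc : 0 < c) (habc : a + b + c = n) :
    (¬ (a = b ∧ b = c) →
      (Finset.univ.image
        (fun i : ZMod n => ({i, i + (a : ZMod n), i + (a : ZMod n) + (b : ZMod n)} :
          Finset (ZMod n)))).card = n) ∧
    ((a = b ∧ b = c) →
      (Finset.univ.image
        (fun i : ZMod n => ({i, i + (a : ZMod n), i + (a : ZMod n) + (b : ZMod n)} :
          Finset (ZMod n)))).card = n / 3) := by
  constructor
  · intro hne
    rw [Finset.card_image_of_injective _ (diffCycle_inj n a b c ha hb hc habc hne),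
      Finset.card_univ, ZMod.card]
  · rintro ⟨rfl, rfl⟩
    exact diffCycle_eq_case n a ha habc
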